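/- Let N ≥ 2, let Ω ⊂ ℝ^N be a bounded open set, let H : Ω × ℝ^N → ℝ be continuous and satisfy (SC1) with constant b, and let f : Ω → ℝ be continuous and bounded. Then every bounded upper semicontinuous viscosity subsolution u of 𝒫⁻₁(D²u) + H(x,∇u) = f(x) in Ω is locally Lipschitz continuous in Ω, with local Lipschitz constants controlled by a constant depending only on b, sup|u| and sup|f| (and the distance to ∂Ω). -/

import Mathlib

open Metric Filter Topology Set

/-- `𝒫⁻ₖ(D²φ(x))`: the sum of the `k` smallest eigenvalues of the Hessian of `φ` at `x`,
expressed through the min-max representation over orthonormal `k`-frames. -/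
noncomputable def Pminus {N : ℕ} (k : ℕ) (φ : EuclideanSpace ℝ (Fin N) → ℝ)
    (x : EuclideanSpace ℝ (Fin N)) : ℝ :=
  sInf {s : ℝ | ∃ ξ : Fin k → EuclideanSpace ℝ (Fin N), Orthonormal ℝ ξ ∧
    s = ∑ i, iteratedFDeriv ℝ 2 φ x ![ξ i, ξ i]}

/-- `𝒫⁺ₖ(D²φ(x))`: the sum of the `k` largest eigenvalues of the Hessian of `φ` at `x`. -/
noncomputable def Pplus {N : ℕ} (k : ℕ) (φ : EuclideanSpace ℝ (Fin N) → ℝ)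
    (x : EuclideanSpace ℝ (Fin N)) : ℝ :=
  sSup {s : ℝ | ∃ ξ : Fin k → EuclideanSpace ℝ (Fin N), Orthonormal ℝ ξ ∧
    s = ∑ i, iteratedFDeriv ℝ 2 φ x ![ξ i, ξ i]}

/-- Viscosity subsolution of `P(D²u) + H(x,∇u) + μ u = f(x)` in `Ω`:
for every `x₀ ∈ Ω` and every `C²` test function `φ` such that `u - φ` has a local
maximum (relative to `Ω`) at `x₀`, one has `P(D²φ(x₀)) + H(x₀,∇φ(x₀)) + μ u(x₀) ≥ f(x₀)`. -/
def IsViscSubsol {N : ℕ}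
    (P : (EuclideanSpace ℝ (Fin N) → ℝ) → EuclideanSpace ℝ (Fin N) → ℝ)
    (Ω : Set (EuclideanSpace ℝ (Fin N)))
    (H : EuclideanSpace ℝ (Fin N) → EuclideanSpace ℝ (Fin N) → ℝ)
    (μ : ℝ) (f : EuclideanSpace ℝ (Fin N) → ℝ)
    (u : EuclideanSpace ℝ (Fin N) → ℝ) : Prop :=
  ∀ x₀ ∈ Ω, ∀ φ : EuclideanSpace ℝ (Fin N) → ℝ, ContDiffAt ℝ 2 φ x₀ →
    IsLocalMaxOn (fun x => u x - φ x) Ω x₀ →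
    f x₀ ≤ P φ x₀ + H x₀ (gradient φ x₀) + μ * u x₀

/-- Viscosity supersolution of `P(D²u) + H(x,∇u) + μ u = f(x)` in `Ω`. -/
def IsViscSupersol {N : ℕ}
    (P : (EuclideanSpace ℝ (Fin N) → ℝ) → EuclideanSpace ℝ (Fin N) → ℝ)
    (Ω : Set (EuclideanSpace ℝ (Fin N)))
    (H : EuclideanSpace ℝ (Fin N) → EuclideanSpace ℝ (Fin N) → ℝ)
    (μ : ℝ) (f : EuclideanSpace ℝ (Fin N) → ℝ)
    (u : EuclideanSpace ℝ (Fin N) → ℝ) : Prop :=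
  ∀ x₀ ∈ Ω, ∀ φ : EuclideanSpace ℝ (Fin N) → ℝ, ContDiffAt ℝ 2 φ x₀ →
    IsLocalMinOn (fun x => u x - φ x) Ω x₀ →
    P φ x₀ + H x₀ (gradient φ x₀) + μ * u x₀ ≤ f x₀

/-- Structure condition (SC1): `|H(x,ξ)| ≤ b‖ξ‖`. -/
def SC1 {N : ℕ} (Ω : Set (EuclideanSpace ℝ (Fin N)))
    (H : EuclideanSpace ℝ (Fin N) → EuclideanSpace ℝ (Fin N) → ℝ) (b : ℝ) : Prop :=
  ∀ x ∈ Ω, ∀ ξ : EuclideanSpace ℝ (Fin N), |H x ξ| ≤ b * ‖ξ‖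

/-- Structure condition (SC2): positive 1-homogeneity in the gradient variable. -/
def SC2 {N : ℕ} (Ω : Set (EuclideanSpace ℝ (Fin N)))
    (H : EuclideanSpace ℝ (Fin N) → EuclideanSpace ℝ (Fin N) → ℝ) : Prop :=
  ∀ x ∈ Ω, ∀ t : ℝ, 0 ≤ t → ∀ ξ : EuclideanSpace ℝ (Fin N), H x (t • ξ) = t * H x ξ

/-- Structure condition (SC3): uniform continuity in `x` through a modulus of continuity. -/
def SC3 {N : ℕ} (Ω : Set (EuclideanSpace ℝ (Fin N)))
    (H : EuclideanSpace ℝ (Fin N) → EuclideanSpace ℝ (Fin N) → ℝ) : Prop :=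
  ∃ ω : ℝ → ℝ, Monotone ω ∧ Filter.Tendsto ω (𝓝[>] (0 : ℝ)) (𝓝 (0 : ℝ)) ∧
    ∀ x ∈ Ω, ∀ y ∈ Ω, ∀ ξ : EuclideanSpace ℝ (Fin N),
      |H x ξ - H y ξ| ≤ ω (‖x - y‖ * (1 + ‖ξ‖))

/-- `Ω ∈ 𝒞_R`: a "hula hoop" domain, i.e. an intersection of a nonempty family of
open balls of the common radius `R`. -/
def HulaHoop {N : ℕ} (R : ℝ) (Ω : Set (EuclideanSpace ℝ (Fin N))) : Prop :=
  ∃ Y : Set (EuclideanSpace ℝ (Fin N)), Y.Nonempty ∧ Ω = ⋂ y ∈ Y, ball y R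

/-- `μ̄ₖ⁻(Ω)`: the supremum (in `EReal`) of those `μ` for which there is an upper
semicontinuous `w < 0` on `cl(Ω)` which is a viscosity subsolution of
`𝒫⁻ₖ(D²w) + H(x,∇w) + μ w = 0` in `Ω`. -/
noncomputable def muBarMinus {N : ℕ} (k : ℕ) (Ω : Set (EuclideanSpace ℝ (Fin N)))
    (H : EuclideanSpace ℝ (Fin N) → EuclideanSpace ℝ (Fin N) → ℝ) : EReal :=
  sSup {m : EReal | ∃ μ : ℝ, m = (μ : EReal) ∧ ∃ w : EuclideanSpace ℝ (Fin N) → ℝ,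
    UpperSemicontinuousOn w (closure Ω) ∧ (∀ x ∈ closure Ω, w x < 0) ∧
    IsViscSubsol (Pminus k) Ω H μ (fun _ => 0) w}

/-- `μₖ⁻(Ω)`: as `μ̄ₖ⁻(Ω)`, but only requiring `w < 0` (and upper semicontinuous) in `Ω`. -/
noncomputable def muMinus {N : ℕ} (k : ℕ) (Ω : Set (EuclideanSpace ℝ (Fin N)))
    (H : EuclideanSpace ℝ (Fin N) → EuclideanSpace ℝ (Fin N) → ℝ) : EReal :=
  sSup {m : EReal | ∃ μ : ℝ, m = (μ : EReal) ∧ ∃ w : EuclideanSpace ℝ (Fin N) → ℝ,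
    UpperSemicontinuousOn w Ω ∧ (∀ x ∈ Ω, w x < 0) ∧
    IsViscSubsol (Pminus k) Ω H μ (fun _ => 0) w}

/-- `μ̄ₖ⁺(Ω)`: the supremum (in `EReal`) of those `μ` for which there is a lower
semicontinuous `w > 0` on `cl(Ω)` which is a viscosity supersolution of
`𝒫⁻ₖ(D²w) + H(x,∇w) + μ w = 0` in `Ω`. -/
noncomputable def muBarPlus {N : ℕ} (k : ℕ) (Ω : Set (EuclideanSpace ℝ (Fin N)))
    (H : EuclideanSpace ℝ (Fin N) → EuclideanSpace ℝ (Fin N) → ℝ) : EReal :=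
  sSup {m : EReal | ∃ μ : ℝ, m = (μ : EReal) ∧ ∃ w : EuclideanSpace ℝ (Fin N) → ℝ,
    LowerSemicontinuousOn w (closure Ω) ∧ (∀ x ∈ closure Ω, 0 < w x) ∧
    IsViscSupersol (Pminus k) Ω H μ (fun _ => 0) w}

/-- `μₖ⁺(Ω)`: as `μ̄ₖ⁺(Ω)`, but only requiring `w > 0` (and lower semicontinuous) in `Ω`. -/
noncomputable def muPlus {N : ℕ} (k : ℕ) (Ω : Set (EuclideanSpace ℝ (Fin N)))
    (H : EuclideanSpace ℝ (Fin N) → EuclideanSpace ℝ (Fin N) → ℝ) : EReal :=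
  sSup {m : EReal | ∃ μ : ℝ, m = (μ : EReal) ∧ ∃ w : EuclideanSpace ℝ (Fin N) → ℝ,
    LowerSemicontinuousOn w Ω ∧ (∀ x ∈ Ω, 0 < w x) ∧
    IsViscSupersol (Pminus k) Ω H μ (fun _ => 0) w}

open scoped RealInnerProductSpace

section USC

lemma usc_exists_max {X : Type*} [TopologicalSpace X] {s : Set X} (hs : IsCompact s)
    (hne : s.Nonempty) {f : X → ℝ} (hf : UpperSemicontinuousOn f s) :
    ∃ x ∈ s, ∀ z ∈ s, f z ≤ f x := by
  by_contra h
  push_neg at h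
  choose z hz hlt using h
  have key : ∀ x (hx : x ∈ s), ∃ V : Set X, IsOpen V ∧ x ∈ V ∧
      ∀ w ∈ V, w ∈ s → f w < f (z x hx) := by
    intro x hx
    have h1 := hf x hx (f (z x hx)) (hlt x hx)
    rw [eventually_nhdsWithin_iff] at h1
    rcases eventually_nhds_iff.mp h1 with ⟨V, hV, hVo, hxV⟩
    exact ⟨V, hVo, hxV, fun w hw hws => hV w hw hws⟩
  choose V hVo hxV hVlt using key
  obtain ⟨t, ht⟩ := hs.elim_nhds_subcover' V (fun x hx => (hVo x hx).mem_nhds (hxV x hx))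
  have htne : t.Nonempty := by
    obtain ⟨x, hx⟩ := hne
    rcases Set.mem_iUnion₂.mp (ht hx) with ⟨i, hi, _⟩
    exact ⟨i, hi⟩
  obtain ⟨i, hit, hmax⟩ := t.exists_max_image (fun x : s => f (z x.1 x.2)) htne
  have hzs : z i.1 i.2 ∈ s := hz i.1 i.2
  rcases Set.mem_iUnion₂.mp (ht hzs) with ⟨j, hjt, hjV⟩
  have h2 := hVlt j.1 j.2 _ hjV hzs
  have h3 := hmax j hjt
  linarith

end USC

section Deriv

variable {E : Type*} [NormedAddCommGroup E] [InnerProductSpace ℝ E]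

/-- The inner product as a real-bilinear continuous map. -/
noncomputable def innerCLM2 (E : Type*) [NormedAddCommGroup E] [InnerProductSpace ℝ E] :
    E →L[ℝ] E →L[ℝ] ℝ :=
  LinearMap.mkContinuous₂
    (LinearMap.mk₂ ℝ (fun x w => ⟪x, w⟫)
      (fun m₁ m₂ n => inner_add_left m₁ m₂ n)
      (fun c m n => real_inner_smul_left m n c)
      (fun m n₁ n₂ => inner_add_right m n₁ n₂)
      (fun c m n => real_inner_smul_right m n c)) 1
    (fun x y => by simpa using norm_inner_le_norm (𝕜 := ℝ) x y)

@[simp] lemma innerCLM2_apply (x w : E) : innerCLM2 E x w = ⟪x, w⟫ := rfl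

lemma norm_innerCLM2 (x : E) : ‖innerCLM2 E x‖ = ‖x‖ := by
  refine le_antisymm (ContinuousLinearMap.opNorm_le_bound _ (norm_nonneg x)
    (fun w => by simpa using norm_inner_le_norm (𝕜 := ℝ) x w)) ?_
  rcases eq_or_ne x 0 with rfl | hx
  · simp
  · have h := (innerCLM2 E x).le_opNorm x
    rw [innerCLM2_apply, real_inner_self_eq_norm_sq] at h
    have hx0 : 0 < ‖x‖ := norm_pos_iff.mpr hx
    have : ‖(‖x‖ ^ 2 : ℝ)‖ = ‖x‖ ^ 2 := by
      rw [Real.norm_eq_abs, abs_of_nonneg (by positivity)]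
    rw [this] at h
    nlinarith [norm_nonneg (innerCLM2 E x)]

lemma phi_eq (y : E) (L K : ℝ) :
    (fun z : E => L * ‖z - y‖ - K * ‖z - y‖ ^ 2)
      = fun z => L * Real.sqrt ⟪z - y, z - y⟫ - K * ⟪z - y, z - y⟫ := by
  funext z
  rw [real_inner_self_eq_norm_sq, Real.sqrt_sq (norm_nonneg _)]

lemma hasFDerivAt_q (y x : E) :
    HasFDerivAt (fun z : E => ⟪z - y, z - y⟫) ((2 : ℝ) • innerCLM2 E (x - y)) x := by
  have h1 : HasFDerivAt (fun z : E => z - y) (ContinuousLinearMap.id ℝ E) x :=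
    (hasFDerivAt_id x).sub_const y
  have h2 := h1.inner ℝ h1
  refine h2.congr_fderiv ?_
  ext w
  simp only [ContinuousLinearMap.smul_apply, innerCLM2_apply, smul_eq_mul,
    ContinuousLinearMap.coe_comp', Function.comp_apply, fderivInnerCLM_apply,
    ContinuousLinearMap.prod_apply, ContinuousLinearMap.coe_id', id_eq]
  rw [real_inner_comm]
  ring

lemma sqrt_inner_self (w : E) : Real.sqrt ⟪w, w⟫ = ‖w‖ := by
  rw [real_inner_self_eq_norm_sq, Real.sqrt_sq (norm_nonneg _)]

lemma hasFDerivAt_norm_sub (y : E) {x : E} (hxy : x ≠ y) :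
    HasFDerivAt (fun z : E => ‖z - y‖) (‖x - y‖⁻¹ • innerCLM2 E (x - y)) x := by
  have ht : ‖x - y‖ ≠ 0 := by
    simp [sub_eq_zero, hxy]
  have hq0 : ⟪x - y, x - y⟫ ≠ (0 : ℝ) := by
    rw [real_inner_self_eq_norm_sq]
    positivity
  have h := (Real.hasDerivAt_sqrt hq0).comp_hasFDerivAt x (hasFDerivAt_q y x)
  have h2 : HasFDerivAt (fun z : E => ‖z - y‖)
      ((1 / (2 * ‖x - y‖)) • (2 : ℝ) • innerCLM2 E (x - y)) x := by
    simpa only [Function.comp_def, sqrt_inner_self] using h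
  refine h2.congr_fderiv ?_
  ext w
  simp only [ContinuousLinearMap.smul_apply, innerCLM2_apply, smul_eq_mul]
  field_simp

lemma hasFDerivAt_phi (y : E) (L K : ℝ) {x : E} (hxy : x ≠ y) :
    HasFDerivAt (fun z : E => L * ‖z - y‖ - K * ‖z - y‖ ^ 2)
      ((L * ‖x - y‖⁻¹ - 2 * K) • innerCLM2 E (x - y)) x := by
  have hs := hasFDerivAt_norm_sub y hxy
  have hq : HasFDerivAt (fun z : E => ‖z - y‖ ^ 2) ((2 : ℝ) • innerCLM2 E (x - y)) x := by
    have := hasFDerivAt_q y x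
    have heq : (fun z : E => ⟪z - y, z - y⟫) = fun z : E => ‖z - y‖ ^ 2 := by
      funext z; rw [real_inner_self_eq_norm_sq]
    rwa [heq] at this
  have h1 := (hs.const_mul L).sub (hq.const_mul K)
  refine h1.congr_fderiv ?_
  ext w
  simp [smul_eq_mul]
  ring

lemma hasFDerivAt_F (y : E) (L K : ℝ) {x : E} (hxy : x ≠ y) :
    HasFDerivAt (fun z : E => (L * ‖z - y‖⁻¹ - 2 * K) • innerCLM2 E (z - y))
      ((L * ‖x - y‖⁻¹ - 2 * K) • innerCLM2 E
        + (L • ((-(‖x - y‖ ^ 2)⁻¹) • (‖x - y‖⁻¹ • innerCLM2 E (x - y)))).smulRight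
            (innerCLM2 E (x - y))) x := by
  have ht : ‖x - y‖ ≠ 0 := by simp [sub_eq_zero, hxy]
  have hn := hasFDerivAt_norm_sub y hxy
  have hinv : HasFDerivAt (fun z : E => ‖z - y‖⁻¹)
      ((-(‖x - y‖ ^ 2)⁻¹) • (‖x - y‖⁻¹ • innerCLM2 E (x - y))) x := by
    have := (hasDerivAt_inv ht).comp_hasFDerivAt x hn
    exact this
  have hc : HasFDerivAt (fun z : E => L * ‖z - y‖⁻¹ - 2 * K)
      (L • ((-(‖x - y‖ ^ 2)⁻¹) • (‖x - y‖⁻¹ • innerCLM2 E (x - y)))) x := by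
    have := (hinv.const_mul L).sub_const (2 * K)
    refine this.congr_fderiv ?_
    ext w
    simp [smul_eq_mul]
  have hA : HasFDerivAt (fun z : E => innerCLM2 E (z - y)) (innerCLM2 E) x := by
    have h := (innerCLM2 E).hasFDerivAt.comp x ((hasFDerivAt_id x).sub_const y)
    refine (h.congr_fderiv ?_ : _)
    · simp
  exact hc.smul hA

lemma iteratedFDeriv_phi_radial (y : E) (L K : ℝ) {x : E} (hxy : x ≠ y) :
    iteratedFDeriv ℝ 2 (fun z : E => L * ‖z - y‖ - K * ‖z - y‖ ^ 2) x
      ![‖x - y‖⁻¹ • (x - y), ‖x - y‖⁻¹ • (x - y)] = -(2 * K) := by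
  have ht : ‖x - y‖ ≠ 0 := by simp [sub_eq_zero, hxy]
  rw [iteratedFDeriv_two_apply]
  have hev : (fderiv ℝ (fun z : E => L * ‖z - y‖ - K * ‖z - y‖ ^ 2)) =ᶠ[𝓝 x]
      (fun z : E => (L * ‖z - y‖⁻¹ - 2 * K) • innerCLM2 E (z - y)) := by
    filter_upwards [isOpen_ne.mem_nhds hxy] with z hz
    exact (hasFDerivAt_phi y L K hz).fderiv
  rw [hev.fderiv_eq, (hasFDerivAt_F y L K hxy).fderiv]
  simp only [Matrix.cons_val_zero, Matrix.cons_val_one, Matrix.head_cons,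
    ContinuousLinearMap.add_apply, ContinuousLinearMap.smul_apply,
    ContinuousLinearMap.smulRight_apply, innerCLM2_apply, smul_eq_mul,
    real_inner_smul_left, real_inner_smul_right, real_inner_self_eq_norm_sq,
    norm_smul, norm_inv, norm_norm, Real.norm_eq_abs, abs_of_nonneg (norm_nonneg (x - y))]
  field_simp
  ring

lemma contDiffAt_phi (y : E) (L K : ℝ) {x : E} (hxy : x ≠ y) :
    ContDiffAt ℝ 2 (fun z : E => L * ‖z - y‖ - K * ‖z - y‖ ^ 2) x := by
  rw [phi_eq]
  have hq : ContDiffAt ℝ 2 (fun z : E => ⟪z - y, z - y⟫) x :=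
    (contDiffAt_id.sub contDiffAt_const).inner ℝ (contDiffAt_id.sub contDiffAt_const)
  have hq0 : ⟪x - y, x - y⟫ ≠ (0 : ℝ) := by
    rw [real_inner_self_eq_norm_sq]
    have : ‖x - y‖ ≠ 0 := by simp [sub_eq_zero, hxy]
    positivity
  exact (contDiffAt_const.mul ((Real.contDiffAt_sqrt hq0).comp x hq)).sub (contDiffAt_const.mul hq)

end Deriv

set_option maxHeartbeats 2000000 in
/-- interior Lipschitz regularity: every bounded upper semicontinuous
viscosity subsolution of `𝒫⁻₁(D²u) + H(x,∇u) = f` in a bounded open set `Ω` is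
locally Lipschitz continuous in `Ω`. -/
theorem statement6 {N : ℕ} (hN : 2 ≤ N)
    (Ω : Set (EuclideanSpace ℝ (Fin N))) (hΩopen : IsOpen Ω)
    (hΩbdd : Bornology.IsBounded Ω)
    (H : EuclideanSpace ℝ (Fin N) → EuclideanSpace ℝ (Fin N) → ℝ) (b : ℝ) (hb : 0 ≤ b)
    (hHcont : ContinuousOn (Function.uncurry H)
      (Ω ×ˢ (univ : Set (EuclideanSpace ℝ (Fin N)))))
    (hSC1 : SC1 Ω H b)
    (f : EuclideanSpace ℝ (Fin N) → ℝ)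
    (hfc : ContinuousOn f Ω) (hfb : ∃ M : ℝ, ∀ x ∈ Ω, |f x| ≤ M)
    (u : EuclideanSpace ℝ (Fin N) → ℝ)
    (hubdd : ∃ M : ℝ, ∀ x ∈ Ω, |u x| ≤ M)
    (husc : UpperSemicontinuousOn u Ω)
    (hsub : IsViscSubsol (Pminus 1) Ω H 0 f u) :
    ∀ x ∈ Ω, ∃ r > (0 : ℝ), ∃ L : NNReal,
      ball x r ⊆ Ω ∧ LipschitzOnWith L u (ball x r) := by
  classical
  obtain ⟨M₀, hM₀⟩ := hfb
  obtain ⟨Mu₀, hMu₀⟩ := hubdd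
  set M : ℝ := max M₀ 0 with hMdef
  set Mu : ℝ := max Mu₀ 0 with hMudef
  have hM0 : (0:ℝ) ≤ M := le_max_right _ _
  have hMu0 : (0:ℝ) ≤ Mu := le_max_right _ _
  have hMf : ∀ x ∈ Ω, |f x| ≤ M := fun x hx => (hM₀ x hx).trans (le_max_left _ _)
  have hMuf : ∀ x ∈ Ω, |u x| ≤ Mu := fun x hx => (hMu₀ x hx).trans (le_max_left _ _)
  intro x₀ hx₀
  obtain ⟨ε, hε0, hball⟩ := Metric.isOpen_iff.mp hΩopen x₀ hx₀
  have hb1 : (0:ℝ) < b + 1 := by linarith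
  set r : ℝ := min (ε/4) (1/(8*(b+1))) with hrdef
  have hr0 : 0 < r := lt_min (by linarith) (by positivity)
  have hrε : 3*r < ε := by
    have h1 : r ≤ ε/4 := min_le_left _ _
    linarith
  have hrb : 8*(b+1)*r ≤ 1 := by
    have h1 : r ≤ 1/(8*(b+1)) := min_le_right _ _
    rw [le_div_iff₀ (by positivity)] at h1
    linarith
  have h3r : closedBall x₀ (3*r) ⊆ Ω := fun z hz =>
    hball (lt_of_le_of_lt (mem_closedBall.mp hz) hrε)
  set L : ℝ := M + 2*Mu/r + 1 with hLdef
  have hL0 : 0 < L := by positivity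
  have hML : M < L := by
    have h1 : 0 ≤ 2*Mu/r := by positivity
    rw [hLdef]; linarith
  have hMuL : 2*Mu ≤ r*L := by
    have h1 : r*L = r*M + 2*Mu + r := by rw [hLdef]; field_simp
    nlinarith [mul_nonneg hr0.le hM0]
  set K : ℝ := L/(8*r) with hKdef
  have hK0 : 0 < K := by positivity
  have h8rK : 8*r*K = L := by rw [hKdef]; field_simp
  have key : ∀ y ∈ ball x₀ r, ∀ x ∈ closedBall y (2*r),
      u x - u y ≤ L*‖x - y‖ - K*‖x - y‖^2 := by
    intro y hy
    have hyΩ : y ∈ Ω := h3r (mem_closedBall.mpr (by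
      have := mem_ball.mp hy; linarith))
    by_contra hcon
    push_neg at hcon
    obtain ⟨x1, hx1mem, hx1⟩ := hcon
    set φ : EuclideanSpace ℝ (Fin N) → ℝ := fun z => L * ‖z - y‖ - K * ‖z - y‖^2 with hφdef
    have hφval : ∀ z, φ z = L * ‖z - y‖ - K * ‖z - y‖^2 := fun z => rfl
    have hcB : closedBall y (2*r) ⊆ Ω := by
      intro z hz
      apply h3r
      rw [mem_closedBall]
      have h1 : dist z y ≤ 2*r := mem_closedBall.mp hz
      have h2 : dist y x₀ ≤ r := (mem_ball.mp hy).le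
      calc dist z x₀ ≤ dist z y + dist y x₀ := dist_triangle _ _ _
        _ ≤ 3*r := by linarith
    have hφcont : Continuous φ := by
      rw [hφdef]
      apply Continuous.sub
      · exact continuous_const.mul ((continuous_id.sub continuous_const).norm)
      · exact continuous_const.mul (((continuous_id.sub continuous_const).norm).pow 2)
    have hvusc : UpperSemicontinuousOn (fun z => u z - u y - φ z) (closedBall y (2*r)) := by
      have h1 : UpperSemicontinuousOn u (closedBall y (2*r)) := husc.mono hcB
      have h2 : UpperSemicontinuousOn (fun z => - u y - φ z) (closedBall y (2*r)) :=
        ((continuous_const.sub hφcont).continuousOn).upperSemicontinuousOn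
      have h3 := h1.add h2
      have heq : (fun z => u z - u y - φ z) = (fun z => u z + (- u y - φ z)) := by
        funext z; ring
      rw [heq]
      exact h3
    obtain ⟨xs, hxs, hmax⟩ := usc_exists_max (isCompact_closedBall y (2*r))
      ⟨y, mem_closedBall_self (by positivity)⟩ hvusc
    have hvx1 : 0 < u x1 - u y - φ x1 := by
      rw [hφval x1]; linarith
    have hvxs : 0 < u xs - u y - φ xs := lt_of_lt_of_le hvx1 (hmax x1 hx1mem)
    have hxsΩ : xs ∈ Ω := hcB hxs
    have hxsy : xs ≠ y := by
      intro h
      rw [h] at hvxs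
      rw [hφval y] at hvxs
      simp at hvxs
    have hsubne : xs - y ≠ 0 := sub_ne_zero.mpr hxsy
    have htne : ‖xs - y‖ ≠ 0 := norm_ne_zero_iff.mpr hsubne
    have ht0 : 0 < ‖xs - y‖ := norm_pos_iff.mpr hsubne
    have htlt : ‖xs - y‖ < 2*r := by
      have h1 : dist xs y ≤ 2*r := mem_closedBall.mp hxs
      rw [dist_eq_norm] at h1
      rcases lt_or_eq_of_le h1 with h | h
      · exact h
      · exfalso
        have hu1 := (abs_le.mp (hMuf xs hxsΩ)).2
        have hu2 := (abs_le.mp (hMuf y hyΩ)).1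
        rw [hφval xs, h] at hvxs
        have h4 : 8*(r*(r*K)) = r*L := by rw [← h8rK]; ring
        nlinarith [mul_pos hr0 hL0]
    have hxs_ball : xs ∈ ball y (2*r) := mem_ball.mpr (by rw [dist_eq_norm]; exact htlt)
    have hlocmax : IsLocalMaxOn (fun z => u z - φ z) Ω xs := by
      have hmem : ball y (2*r) ∈ 𝓝[Ω] xs :=
        mem_nhdsWithin_of_mem_nhds (isOpen_ball.mem_nhds hxs_ball)
      have hev : ∀ᶠ z in 𝓝[Ω] xs, (fun z => u z - φ z) z ≤ u xs - φ xs := by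
        filter_upwards [hmem] with z hz
        have h1 := hmax z (ball_subset_closedBall hz)
        linarith
      exact hev
    have hcd : ContDiffAt ℝ 2 φ xs := by
      rw [hφdef]; exact contDiffAt_phi y L K hxsy
    have hsub' := hsub xs hxsΩ φ hcd hlocmax
    have hfd : fderiv ℝ φ xs
        = (L * ‖xs - y‖⁻¹ - 2*K) • innerCLM2 (EuclideanSpace ℝ (Fin N)) (xs - y) := by
      rw [hφdef]; exact (hasFDerivAt_phi y L K hxsy).fderiv
    have hc0 : 0 ≤ L * ‖xs - y‖⁻¹ - 2*K := by
      have h2 : 2*K*‖xs - y‖ ≤ L := by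
        nlinarith [mul_le_mul_of_nonneg_left htlt.le hK0.le, h8rK]
      have h3 : 2*K ≤ L / ‖xs - y‖ := (le_div_iff₀ ht0).mpr (by linarith)
      rw [div_eq_mul_inv] at h3
      linarith
    have hgrad : ‖gradient φ xs‖ ≤ L := by
      have h1 : gradient φ xs
          = (InnerProductSpace.toDual ℝ (EuclideanSpace ℝ (Fin N))).symm (fderiv ℝ φ xs) := rfl
      rw [h1, LinearIsometryEquiv.norm_map, hfd, norm_smul, norm_innerCLM2,
        Real.norm_eq_abs, abs_of_nonneg hc0]
      have hexp : (L * ‖xs - y‖⁻¹ - 2*K) * ‖xs - y‖ = L - 2*K*‖xs - y‖ := by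
        field_simp
      rw [hexp]
      nlinarith [mul_pos hK0 ht0]
    have hH : H xs (gradient φ xs) ≤ b * L := by
      have h1 := hSC1 xs hxsΩ (gradient φ xs)
      have h2 := le_abs_self (H xs (gradient φ xs))
      have h3 : b * ‖gradient φ xs‖ ≤ b * L := mul_le_mul_of_nonneg_left hgrad hb
      linarith
    have hP : Pminus 1 φ xs ≤ -(2*K) := by
      apply csInf_le
      · refine ⟨-(‖iteratedFDeriv ℝ 2 φ xs‖), ?_⟩
        rintro s ⟨ξ, hξ, rfl⟩
        rw [Fin.sum_univ_one]
        have h1 : ‖ξ 0‖ = 1 := hξ.1 0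
        have h2 := (iteratedFDeriv ℝ 2 φ xs).le_opNorm ![ξ 0, ξ 0]
        have h3 : ∏ i, ‖(![ξ 0, ξ 0] : Fin 2 → EuclideanSpace ℝ (Fin N)) i‖ = 1 := by
          rw [Fin.prod_univ_two]
          simp [h1]
        rw [h3, mul_one, Real.norm_eq_abs] at h2
        have h4 := (abs_le.mp h2).1
        linarith
      · refine ⟨fun _ => ‖xs - y‖⁻¹ • (xs - y),
          ⟨fun i => ?_, fun i j hij => absurd (Subsingleton.elim i j) hij⟩, ?_⟩
        · rw [norm_smul, norm_inv, norm_norm, inv_mul_cancel₀ htne]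
        · rw [Fin.sum_univ_one, hφdef]
          exact (iteratedFDeriv_phi_radial y L K hxsy).symm
    have hflb : -M ≤ f xs := (abs_le.mp (hMf xs hxsΩ)).1
    rw [zero_mul, add_zero] at hsub'
    have hq1 : 2*K ≤ b*L + M := by linarith
    have hq2 : 4*r*(2*K) ≤ 4*r*(b*L + M) := by
      apply mul_le_mul_of_nonneg_left hq1 (by positivity)
    have hq3 : L ≤ 4*r*(b*L) + 4*r*M := by nlinarith [h8rK]
    have hq4 : 4*r*M ≤ 4*r*L := by nlinarith [hML.le, hr0.le]
    have hq5 : 4*r*((b+1)*L) ≤ L/2 := by nlinarith [mul_le_mul_of_nonneg_right hrb hL0.le]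
    nlinarith
  refine ⟨r, hr0, L.toNNReal, ?_, ?_⟩
  · exact fun z hz => h3r (mem_closedBall.mpr (by
      have := mem_ball.mp hz; linarith))
  · rw [lipschitzOnWith_iff_dist_le_mul]
    intro p hp q hq
    have hpq : dist p q ≤ 2*r := by
      have h1 := mem_ball.mp hp
      have h2 := mem_ball.mp hq
      calc dist p q ≤ dist p x₀ + dist x₀ q := dist_triangle _ _ _
        _ ≤ 2*r := by rw [dist_comm x₀ q]; linarith
    have h1 := key q hq p (mem_closedBall.mpr hpq)
    have h2 := key p hp q (mem_closedBall.mpr (by rwa [dist_comm]))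
    have hn1 : ‖p - q‖ = dist p q := (dist_eq_norm _ _).symm
    have hn2 : ‖q - p‖ = dist p q := by rw [← dist_eq_norm, dist_comm]
    rw [hn1] at h1
    rw [hn2] at h2
    rw [Real.dist_eq]
    simp only [Real.coe_toNNReal _ hL0.le]
    rw [abs_le]
    have hKd : 0 ≤ K * dist p q ^ 2 := by positivity
    constructor
    · linarith
    · linarith
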